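/- Fix z ∈ ℝᵐ and k > 0. Let ū be a minimizer of ½‖u - |z|‖₂² over the set {u ∈ ℝᵐ : 0 ≤ u ≤ 1, ⟨u, 1⟩ ≤ k}. Then u* = sign(z) ⊙ ū is a minimizer of ½‖u - z‖₂² over the set {u ∈ ℝᵐ : -1 ≤ u ≤ 1, ‖u‖₁ ≤ k}, and the two minimal objective values are equal. -/

import Mathlib

open Finset

theorem stmt_9 (m : ℕ) (z : Fin m → ℝ) (k : ℝ) (hk : 0 < k) (ubar : Fin m → ℝ)
    (hmem : (∀ i, 0 ≤ ubar i ∧ ubar i ≤ 1) ∧ (∑ i, ubar i) ≤ k)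
    (hmin : ∀ u : Fin m → ℝ, (∀ i, 0 ≤ u i ∧ u i ≤ 1) → (∑ i, u i) ≤ k →
        (1 / 2) * (∑ i, (ubar i - |z i|) ^ 2) ≤ (1 / 2) * ∑ i, (u i - |z i|) ^ 2) :
    (∀ i, -1 ≤ Real.sign (z i) * ubar i ∧ Real.sign (z i) * ubar i ≤ 1) ∧
    (∑ i, |Real.sign (z i) * ubar i|) ≤ k ∧
    (∀ u : Fin m → ℝ, (∀ i, -1 ≤ u i ∧ u i ≤ 1) → (∑ i, |u i|) ≤ k →
        (1 / 2) * (∑ i, (Real.sign (z i) * ubar i - z i) ^ 2) ≤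
          (1 / 2) * ∑ i, (u i - z i) ^ 2) ∧
    (1 / 2) * (∑ i, (Real.sign (z i) * ubar i - z i) ^ 2) =
      (1 / 2) * ∑ i, (ubar i - |z i|) ^ 2 := by
  obtain ⟨hbox, hsum⟩ := hmem
  -- Step 1: ubar i = 0 whenever z i = 0
  have hzero : ∀ i, z i = 0 → ubar i = 0 := by
    intro i0 hz0
    set u' : Fin m → ℝ := fun i => if z i = 0 then 0 else ubar i with hu'
    have hfeas : ∀ i, 0 ≤ u' i ∧ u' i ≤ 1 := by
      intro i; by_cases h : z i = 0 <;>
        simp [hu', h, (hbox i).1, (hbox i).2, zero_le_one]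
    have hsum' : (∑ i, u' i) ≤ k := by
      refine le_trans (Finset.sum_le_sum ?_) hsum
      intro i _; by_cases h : z i = 0 <;> simp [hu', h, (hbox i).1]
    have h := hmin u' hfeas hsum'
    have h2 : (∑ i, (ubar i - |z i|) ^ 2) ≤ ∑ i, (u' i - |z i|) ^ 2 := by linarith
    have hterm : ∀ i ∈ Finset.univ, (u' i - |z i|) ^ 2 ≤ (ubar i - |z i|) ^ 2 := by
      intro i _
      by_cases h : z i = 0
      · simp only [hu', h, if_true, abs_zero, sub_zero]
        simpa using sq_nonneg (ubar i)
      · simp [hu', h]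
    have hsum0 : ∑ i, ((ubar i - |z i|) ^ 2 - (u' i - |z i|) ^ 2) = 0 := by
      rw [Finset.sum_sub_distrib]
      have := Finset.sum_le_sum hterm
      linarith
    have key := (Finset.sum_eq_zero_iff_of_nonneg
      (fun j _ => by linarith [hterm j (Finset.mem_univ j)])).mp hsum0 i0
      (Finset.mem_univ i0)
    simp only [hu', hz0, if_true, abs_zero, sub_zero] at key
    nlinarith [key]
  -- pointwise equality of objective terms
  have heq : ∀ i, (Real.sign (z i) * ubar i - z i) ^ 2 = (ubar i - |z i|) ^ 2 := by
    intro i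
    rcases lt_trichotomy (z i) 0 with h | h | h
    · rw [Real.sign_of_neg h, abs_of_neg h]; ring
    · simp [h, hzero i h]
    · rw [Real.sign_of_pos h, abs_of_pos h]; ring
  -- pointwise: |sign * ubar| = ubar
  have habs : ∀ i, |Real.sign (z i) * ubar i| = ubar i := by
    intro i
    rcases lt_trichotomy (z i) 0 with h | h | h
    · rw [Real.sign_of_neg h]
      simp [abs_of_nonneg (hbox i).1]
    · simp [h, hzero i h]
    · rw [Real.sign_of_pos h]
      simp [abs_of_nonneg (hbox i).1]
  refine ⟨?_, ?_, ?_, ?_⟩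
  · intro i
    have h1 : |Real.sign (z i) * ubar i| ≤ 1 := by
      rw [habs i]; exact (hbox i).2
    exact abs_le.mp h1
  · calc (∑ i, |Real.sign (z i) * ubar i|) = ∑ i, ubar i := by
          exact Finset.sum_congr rfl fun i _ => habs i
      _ ≤ k := hsum
  · intro u hu hsumu
    have hfeas : ∀ i, 0 ≤ |u i| ∧ |u i| ≤ 1 := fun i =>
      ⟨abs_nonneg _, abs_le.mpr (hu i)⟩
    have h := hmin (fun i => |u i|) hfeas hsumu
    have hterm : ∀ i ∈ Finset.univ, (|u i| - |z i|) ^ 2 ≤ (u i - z i) ^ 2 := by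
      intro i _
      have h1 : u i * z i ≤ |u i| * |z i| := by
        rw [← abs_mul]; exact le_abs_self _
      have h2 : |u i| ^ 2 = (u i) ^ 2 := sq_abs _
      have h3 : |z i| ^ 2 = (z i) ^ 2 := sq_abs _
      nlinarith
    have h4 := Finset.sum_le_sum hterm
    have h5 : (∑ i, (Real.sign (z i) * ubar i - z i) ^ 2)
        = ∑ i, (ubar i - |z i|) ^ 2 := Finset.sum_congr rfl fun i _ => heq i
    rw [h5]
    linarith
  · rw [Finset.sum_congr rfl fun i _ => heq i]
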